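/- Let R be a nonzero commutative ring with a subset S and a family T of elements of R such that: (N1) every element of R is uniquely a sum of distinct elements of S; (N2) for all t ∈ T and s ∈ S, t·s ∈ {0, s}; (N3) for any two distinct s, s' ∈ S there exists t ∈ T with exactly one of t·s, t·s' equal to 0. Then any two distinct elements s, s' of S satisfy s·s' = 0. -/
import Mathlib


/-- Under (N1), (N2), (N3), any two distinct elements of `S`
multiply to `0`. -/
theorem stmt_1 {R : Type*} [CommRing R] [Nontrivial R] (S T : Set R)
    (hN1 : ∀ x : R, ∃! F : Finset R, ↑F ⊆ S ∧ ∑ a ∈ F, a = x)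
    (hN2 : ∀ t ∈ T, ∀ s ∈ S, t * s = 0 ∨ t * s = s)
    (hN3 : ∀ s ∈ S, ∀ s' ∈ S, s ≠ s' →
      ∃ t ∈ T, (t * s = 0 ∧ t * s' ≠ 0) ∨ (t * s ≠ 0 ∧ t * s' = 0)) :
    ∀ s ∈ S, ∀ s' ∈ S, s ≠ s' → s * s' = 0 := by
  intro s hs s' hs' hne
  obtain ⟨t, ht, hcase⟩ := hN3 s hs s' hs' hne
  rcases hcase with ⟨h1, h2⟩ | ⟨h1, h2⟩
  · have h3 : t * s' = s' := (hN2 t ht s' hs').resolve_left h2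
    calc s * s' = s * (t * s') := by rw [h3]
      _ = (t * s) * s' := by ring
      _ = 0 := by rw [h1, zero_mul]
  · have h3 : t * s = s := (hN2 t ht s hs).resolve_left h1
    calc s * s' = (t * s) * s' := by rw [h3]
      _ = s * (t * s') := by ring
      _ = 0 := by rw [h2, mul_zero]
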